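/- Normalization of the adapted kernel (Appendix A of the paper): Let ℏ > 0 and B ∈ GL(2d,R), and define K(ρ₀) := 2^d ∫_{R^{2d}} e^{−2iπ⟨ρ₁,ρ₀⟩} G(ρ₁) G(πℏ · B J Bᵀ ρ₁ − ρ₀) dρ₁. Then ∫_{R^{2d}} K(ρ₀) dρ₀ = 1. -/

import Mathlib

open MeasureTheory Matrix

noncomputable section

/-- The standard symplectic matrix `J = (0, -I; I, 0)` on `ℝ^{2d}`. -/
def Jmat (d : ℕ) : Matrix (Fin d ⊕ Fin d) (Fin d ⊕ Fin d) ℝ :=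
  Matrix.fromBlocks 0 (-1) 1 0

/-- Euclidean inner product on `ℝ^{2d}`. -/
def ip {d : ℕ} (v w : (Fin d ⊕ Fin d) → ℝ) : ℝ := ∑ i, v i * w i

/-- The Gaussian `G(w) = exp(-π ‖w‖²)` on `ℝ^{2d}`. -/
def Gfun {d : ℕ} (w : (Fin d ⊕ Fin d) → ℝ) : ℝ := Real.exp (-(Real.pi * ∑ i, (w i) ^ 2))

/-- The kernel `K(ρ₀) = 2^d ∫ e^{-2iπ⟨ρ₁,ρ₀⟩} G(ρ₁) G(πℏ BJBᵀ ρ₁ − ρ₀) dρ₁`. -/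
def Kker (d : ℕ) (ℏ : ℝ) (B : Matrix (Fin d ⊕ Fin d) (Fin d ⊕ Fin d) ℝ)
    (ρ₀ : (Fin d ⊕ Fin d) → ℝ) : ℂ :=
  (2 : ℝ) ^ d *
    ∫ ρ₁ : (Fin d ⊕ Fin d) → ℝ,
      Complex.exp (-(2 * Real.pi * Complex.I) * (ip ρ₁ ρ₀ : ℝ)) *
        (Gfun ρ₁ : ℝ) *
        ((Gfun ((Real.pi * ℏ) • ((B * Jmat d * Bᵀ).mulVec ρ₁) - ρ₀) : ℝ) : ℂ)

namespace AdaptedKernelAux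

open Real Complex

variable {d : ℕ}

abbrev V (d : ℕ) := (Fin d ⊕ Fin d) → ℝ

lemma Jskew (d : ℕ) (x : (Fin d ⊕ Fin d) → ℝ) : x ⬝ᵥ (Jmat d).mulVec x = 0 := by
  have h : ∀ i, x (Sum.inr i) * x (Sum.inl i) = x (Sum.inl i) * x (Sum.inr i) :=
    fun i => mul_comm _ _
  simp [Jmat, dotProduct, Matrix.mulVec, Fintype.sum_sum_type, Matrix.fromBlocks,
    Matrix.one_apply, Finset.mul_sum, mul_ite, Finset.sum_ite_eq, Finset.sum_ite_eq', h]

lemma BJBskew (d : ℕ) (B : Matrix (Fin d ⊕ Fin d) (Fin d ⊕ Fin d) ℝ)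
    (v : (Fin d ⊕ Fin d) → ℝ) : v ⬝ᵥ (B * Jmat d * Bᵀ).mulVec v = 0 := by
  rw [← Matrix.mulVec_mulVec, ← Matrix.mulVec_mulVec, Matrix.dotProduct_mulVec,
    ← Matrix.mulVec_transpose]
  exact Jskew d _

lemma exp_prod (c : ℝ) (w : V d) :
    Real.exp (-(c * ∑ i, (w i)^2)) = ∏ i, Real.exp (-(c * (w i)^2)) := by
  rw [← Real.exp_sum]
  congr 1
  rw [Finset.mul_sum, ← Finset.sum_neg_distrib]

lemma int1d (c : ℝ) (hc : 0 < c) : Integrable (fun x : ℝ => Real.exp (-(c * x^2))) := by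
  simpa [neg_mul] using integrable_exp_neg_mul_sq hc

lemma Gint : Integrable (Gfun (d := d)) := by
  have h : Gfun (d := d) = fun w => ∏ i : Fin d ⊕ Fin d, Real.exp (-(π * (w i)^2)) := by
    funext w; exact exp_prod π w
  rw [h]
  exact MeasureTheory.Integrable.fintype_prod
    (f := fun (_ : Fin d ⊕ Fin d) (x : ℝ) => Real.exp (-(π * x^2)))
    (fun _ => int1d π Real.pi_pos)

lemma Gnonneg (w : V d) : 0 ≤ Gfun w := Real.exp_nonneg _

lemma Gcont : Continuous (Gfun (d := d)) := by unfold Gfun; fun_prop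

lemma shearMP (m : V d → V d) (hm : Continuous m) :
    MeasurePreserving (fun p : V d × V d => (p.2, m p.2 - p.1))
      ((volume : Measure (V d)).prod volume) ((volume : Measure (V d)).prod volume) := by
  have h2 : MeasurePreserving (fun p : V d × V d => (p.1, m p.1 - p.2))
      ((volume : Measure (V d)).prod volume) ((volume : Measure (V d)).prod volume) := by
    refine MeasurePreserving.skew_product (MeasurePreserving.id _)
      (g := fun a c => m a - c) ?_ (Filter.Eventually.of_forall fun a => ?_)
    · exact ((hm.comp continuous_fst).sub continuous_snd).measurable
    · exact Measure.map_sub_left_eq_self volume (m a)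
  exact h2.comp Measure.measurePreserving_swap

lemma boundInt (m : V d → V d) (hm : Continuous m) :
    Integrable (fun p : V d × V d => Gfun p.2 * Gfun (m p.2 - p.1))
      ((volume : Measure (V d)).prod volume) := by
  have h1 : Integrable (fun q : V d × V d => Gfun q.1 * Gfun q.2)
      ((volume : Measure (V d)).prod volume) := Gint.mul_prod Gint
  have := (shearMP m hm).integrable_comp h1.aestronglyMeasurable
  exact this.2 h1

lemma ip_eq (v w : V d) : ip v w = v ⬝ᵥ w := rfl

lemma oneD (t : ℝ) :
    ∫ x : ℝ, Complex.exp (Complex.I * (2 * π * t) * x) * Complex.exp (-(π:ℂ) * x^2)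
      = ((Real.exp (-(π * t^2)) : ℝ) : ℂ) := by
  have hb : (0:ℝ) < ((π:ℂ)).re := by simpa using Real.pi_pos
  have := fourierIntegral_gaussian hb ((2 * π * t : ℝ) : ℂ)
  rw [show ((2 * π * t : ℝ) : ℂ) = (2 * π * t : ℂ) by push_cast; ring] at this
  rw [this]
  rw [show ((π:ℂ)/(π:ℂ)) = 1 from div_self (by exact_mod_cast Real.pi_ne_zero)]
  rw [Complex.one_cpow, one_mul, Complex.ofReal_exp]
  congr 1
  push_cast
  have hπ : (π:ℂ) ≠ 0 := by exact_mod_cast Real.pi_ne_zero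
  field_simp
  ring

lemma inner_int (ρ₁ a : V d) (h0 : ip ρ₁ a = 0) :
    (∫ ρ₀ : V d, Complex.exp (-(2 * π * Complex.I) * (ip ρ₁ ρ₀ : ℝ)) * ((Gfun (a - ρ₀) : ℝ) : ℂ))
      = ((Gfun ρ₁ : ℝ) : ℂ) := by
  have h1 : ∀ ρ₀ : V d,
      Complex.exp (-(2 * π * Complex.I) * (ip ρ₁ ρ₀ : ℝ)) * ((Gfun (a - ρ₀) : ℝ) : ℂ)
      = (fun u => Complex.exp (-(2 * π * Complex.I) * (ip ρ₁ (a - u) : ℝ)) * ((Gfun u : ℝ) : ℂ))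
          (a - ρ₀) := by
    intro ρ₀
    simp only [sub_sub_cancel]
  simp_rw [h1]
  rw [integral_sub_left_eq_self
    (fun u => Complex.exp (-(2 * π * Complex.I) * (ip ρ₁ (a - u) : ℝ)) * ((Gfun u : ℝ) : ℂ))
    volume a]
  have h2 : ∀ u : V d,
      Complex.exp (-(2 * π * Complex.I) * (ip ρ₁ (a - u) : ℝ)) * ((Gfun u : ℝ) : ℂ)
      = ∏ i, (Complex.exp (Complex.I * (2 * π * ρ₁ i) * (u i)) *
          Complex.exp (-(π:ℂ) * (u i)^2)) := by
    intro u
    have hip : ip ρ₁ (a - u) = -(ip ρ₁ u) := by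
      rw [ip_eq, ip_eq, dotProduct_sub, ← ip_eq, ← ip_eq, h0, zero_sub]
    rw [hip]
    simp_rw [← Complex.exp_add]
    rw [Gfun, Complex.ofReal_exp, ← Complex.exp_add, ← Complex.exp_sum]
    congr 1
    push_cast [ip]
    rw [Finset.sum_add_distrib]
    congr 1
    · rw [neg_mul_neg, Finset.mul_sum]
      exact Finset.sum_congr rfl fun i _ => by ring
    · rw [Finset.mul_sum, ← Finset.sum_neg_distrib]
      exact Finset.sum_congr rfl fun i _ => by ring
  simp_rw [h2]
  rw [MeasureTheory.integral_fintype_prod_volume_eq_prod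
    (f := fun i (x : ℝ) => Complex.exp (Complex.I * (2 * π * ρ₁ i) * x) *
      Complex.exp (-(π:ℂ) * x^2))]
  simp_rw [oneD]
  rw [← Complex.ofReal_prod]
  rw [← exp_prod π ρ₁, Gfun]

end AdaptedKernelAux

open AdaptedKernelAux Real

/-- **Normalization of the adapted kernel**: `∫ K(ρ₀) dρ₀ = 1`. -/
theorem adapted_kernel_normalization
    (d : ℕ) (ℏ : ℝ) (hℏ : 0 < ℏ)
    (B : Matrix (Fin d ⊕ Fin d) (Fin d ⊕ Fin d) ℝ) (hB : IsUnit B.det) :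
    (∫ ρ₀ : (Fin d ⊕ Fin d) → ℝ, Kker d ℏ B ρ₀) = 1 := by
  unfold Kker
  set m : V d → V d := fun ρ₁ => (Real.pi * ℏ) • ((B * Jmat d * Bᵀ).mulVec ρ₁) with hm
  have hmc : Continuous m := by
    have h1 : Continuous fun v : V d => (B * Jmat d * Bᵀ).mulVec v :=
      LinearMap.continuous_of_finiteDimensional ((B * Jmat d * Bᵀ).mulVecLin)
    exact h1.const_smul (Real.pi * ℏ)
  have hphase : ∀ ρ₁ : V d, ip ρ₁ (m ρ₁) = 0 := by
    intro ρ₁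
    rw [ip_eq, hm]
    simp only
    rw [dotProduct_smul, BJBskew, smul_zero]
  have hipc : Continuous fun p : V d × V d => ip p.2 p.1 := by
    unfold ip
    exact continuous_finset_sum _ fun i _ =>
      ((continuous_apply i).comp continuous_snd).mul ((continuous_apply i).comp continuous_fst)
  have hFc : Continuous fun p : V d × V d =>
      Complex.exp (-(2 * Real.pi * Complex.I) * (ip p.2 p.1 : ℝ)) *
        ((Gfun p.2 : ℝ) : ℂ) * ((Gfun (m p.2 - p.1) : ℝ) : ℂ) := by
    refine ((Complex.continuous_exp.comp
      (continuous_const.mul (Complex.continuous_ofReal.comp hipc))).mul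
      (Complex.continuous_ofReal.comp (Gcont.comp continuous_snd))).mul
      (Complex.continuous_ofReal.comp (Gcont.comp ?_))
    exact (hmc.comp continuous_snd).sub continuous_fst
  have hFi : Integrable
      (Function.uncurry fun ρ₀ ρ₁ : V d =>
        Complex.exp (-(2 * Real.pi * Complex.I) * (ip ρ₁ ρ₀ : ℝ)) *
          ((Gfun ρ₁ : ℝ) : ℂ) * ((Gfun (m ρ₁ - ρ₀) : ℝ) : ℂ))
      ((volume : Measure (V d)).prod volume) := by
    refine (boundInt m hmc).mono' hFc.aestronglyMeasurable
      (Filter.Eventually.of_forall fun p => ?_)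
    rw [Function.uncurry]
    rw [norm_mul, norm_mul, Complex.norm_exp]
    have hre : (-(2 * (Real.pi:ℂ) * Complex.I) * ((ip p.2 p.1 : ℝ) : ℂ)).re = 0 := by
      simp
    rw [hre, Real.exp_zero, one_mul, Complex.norm_real, Complex.norm_real,
      Real.norm_eq_abs, Real.norm_eq_abs, abs_of_nonneg (Gnonneg _),
      abs_of_nonneg (Gnonneg _)]
  rw [MeasureTheory.integral_const_mul]
  rw [MeasureTheory.integral_integral_swap hFi]
  have hstep : ∀ ρ₁ : V d,
      (∫ ρ₀ : V d, Complex.exp (-(2 * Real.pi * Complex.I) * (ip ρ₁ ρ₀ : ℝ)) *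
        ((Gfun ρ₁ : ℝ) : ℂ) * ((Gfun (m ρ₁ - ρ₀) : ℝ) : ℂ))
      = ((Gfun ρ₁ * Gfun ρ₁ : ℝ) : ℂ) := by
    intro ρ₁
    have h3 : ∀ ρ₀ : V d,
        Complex.exp (-(2 * Real.pi * Complex.I) * (ip ρ₁ ρ₀ : ℝ)) *
          ((Gfun ρ₁ : ℝ) : ℂ) * ((Gfun (m ρ₁ - ρ₀) : ℝ) : ℂ)
        = ((Gfun ρ₁ : ℝ) : ℂ) *
            (Complex.exp (-(2 * Real.pi * Complex.I) * (ip ρ₁ ρ₀ : ℝ)) *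
              ((Gfun (m ρ₁ - ρ₀) : ℝ) : ℂ)) := fun ρ₀ => by ring
    simp_rw [h3]
    rw [MeasureTheory.integral_const_mul, inner_int ρ₁ (m ρ₁) (hphase ρ₁),
      ← Complex.ofReal_mul]
  simp_rw [hstep]
  have hofr : (∫ y : V d, ((Gfun y * Gfun y : ℝ) : ℂ)) = ((∫ y : V d, Gfun y * Gfun y : ℝ) : ℂ) :=
    integral_ofReal
  rw [hofr]
  have hGG : ∀ w : V d, Gfun w * Gfun w = ∏ i, Real.exp (-((2*π) * (w i)^2)) := by
    intro w
    rw [← exp_prod (2*π) w, Gfun, ← Real.exp_add]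
    congr 1
    ring
  simp_rw [hGG]
  rw [MeasureTheory.integral_fintype_prod_volume_eq_pow (ι := Fin d ⊕ Fin d)
    (fun x : ℝ => Real.exp (-((2*π) * x^2)))]
  have h1 : (∫ x : ℝ, Real.exp (-((2*π) * x^2))) = Real.sqrt (1/2) := by
    have : (fun x : ℝ => Real.exp (-((2*π) * x^2))) = fun x => Real.exp (-(2*π) * x^2) := by
      funext x; ring_nf
    rw [this, integral_gaussian]
    congr 1
    rw [eq_div_iff (by norm_num : (2:ℝ) ≠ 0)]
    field_simp
  rw [h1]
  have hcard : Fintype.card (Fin d ⊕ Fin d) = 2 * d := by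
    simp [Fintype.card_sum, two_mul]
  rw [hcard, pow_mul, Real.sq_sqrt (by norm_num : (0:ℝ) ≤ 1/2)]
  push_cast
  rw [← mul_pow]
  norm_num
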